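/- Let E be a symmetric monoidal category compatible with small colimits and f : A → B a morphism of commutative algebra objects such that the canonical map B ⊗_A B → B is an isomorphism. Then the forgetful (restriction) functor f_* : Mod_B(E) → Mod_A(E) is fully faithful. -/

import Mathlib

/-!
STATEMENT 4: Let `E` be a symmetric monoidal category compatible with small colimits and
`f : A ⟶ B` a morphism of commutative algebra objects such that the canonical map
`B ⊗_A B ⟶ B` (induced by the multiplication of `B` on the coequalizer presentation of the
relative tensor product) is an isomorphism.  Then the forgetful (restriction-of-scalars)
functor `f_* : Mod_B(E) ⥤ Mod_A(E)` is fully faithful.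
-/

open CategoryTheory CategoryTheory.Limits CategoryTheory.MonoidalCategory CategoryTheory.MonObj

universe v u

namespace Stmt4

variable {C : Type u} [Category.{v} C] [MonoidalCategory C] [SymmetricCategory C]

variable {A B : CommMon C}

/-- Multiply `A` into the left factor: `B ⊗ (A ⊗ B) ⟶ B ⊗ B`. -/
def actLeft (f : A ⟶ B) : B.X ⊗ (A.X ⊗ B.X) ⟶ B.X ⊗ B.X :=
  (α_ B.X A.X B.X).inv ≫ (((B.X ◁ f.hom.hom) ≫ μ[B.X]) ▷ B.X)

/-- Multiply `A` into the right factor: `B ⊗ (A ⊗ B) ⟶ B ⊗ B`. -/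
def actRight (f : A ⟶ B) : B.X ⊗ (A.X ⊗ B.X) ⟶ B.X ⊗ B.X :=
  B.X ◁ ((f.hom.hom ▷ B.X) ≫ μ[B.X])

/-- The multiplication of `B` coequalizes the two actions, so that it descends to the
relative tensor product `B ⊗_A B`. -/
lemma mul_coeq (f : A ⟶ B) : actLeft f ≫ μ[B.X] = actRight f ≫ μ[B.X] := by
  have key : ∀ g : A.X ⟶ B.X, ((α_ B.X A.X B.X).inv ≫ (((B.X ◁ g) ≫ μ[B.X]) ▷ B.X)) ≫ μ[B.X] =
      (B.X ◁ ((g ▷ B.X) ≫ μ[B.X])) ≫ μ[B.X] := by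
    intro g
    simp only [comp_whiskerRight, MonoidalCategory.whiskerLeft_comp, Category.assoc,
      MonObj.mul_assoc]
    slice_lhs 2 3 => rw [associator_naturality_middle]
    simp
  exact key f.hom.hom

/-- The action map of a module object, in tensor form. -/
def _root_.CategoryTheory.Mod.act {R : C} [MonObj R] (M : Mod C R) : R ⊗ M.X ⟶ M.X :=
  ModObj.smul (M := R) (X := M.X)

theorem _root_.CategoryTheory.Mod.assoc {R : C} [MonObj R] (M : Mod C R) :
    (μ[R] ▷ M.X) ≫ M.act = (α_ R R M.X).hom ≫ (R ◁ M.act) ≫ M.act :=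
  ModObj.mul_smul (M := R) M.X

theorem _root_.CategoryTheory.Mod.one_act {R : C} [MonObj R] (M : Mod C R) :
    (η[R] ▷ M.X) ≫ M.act = (λ_ M.X).hom :=
  ModObj.one_smul (M := R) M.X

/-- The two `A`-multiplications coequalize the auxiliary map `w`. -/
lemma w_coeq (f : A ⟶ B) {M N : Mod C B.X} (g : M.X ⟶ N.X)
    (hg : ((f.hom.hom ▷ M.X) ≫ M.act) ≫ g = (A.X ◁ g) ≫ (f.hom.hom ▷ N.X) ≫ N.act) :
    (actLeft f ▷ M.X) ≫
      ((α_ B.X B.X M.X).hom ≫ (B.X ◁ (M.act ≫ g)) ≫ N.act) =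
    (actRight f ▷ M.X) ≫
      ((α_ B.X B.X M.X).hom ≫ (B.X ◁ (M.act ≫ g)) ≫ N.act) := by
  dsimp only [actLeft, actRight]
  have key : ∀ φ : A.X ⟶ B.X,
      ((φ ▷ M.X) ≫ M.act) ≫ g = (A.X ◁ g) ≫ (φ ▷ N.X) ≫ N.act →
      (((α_ B.X A.X B.X).inv ≫ (((B.X ◁ φ) ≫ μ[B.X]) ▷ B.X)) ▷ M.X) ≫
        ((α_ B.X B.X M.X).hom ≫ (B.X ◁ (M.act ≫ g)) ≫ N.act) =
      ((B.X ◁ ((φ ▷ B.X) ≫ μ[B.X])) ▷ M.X) ≫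
        ((α_ B.X B.X M.X).hom ≫ (B.X ◁ (M.act ≫ g)) ≫ N.act) := by
    intro φ hg
    simp only [comp_whiskerRight, Category.assoc, MonoidalCategory.whiskerLeft_comp]
    -- RHS normalization
    slice_rhs 2 3 => rw [associator_naturality_middle]
    slice_rhs 3 4 => rw [← MonoidalCategory.whiskerLeft_comp, Mod.assoc,
      MonoidalCategory.whiskerLeft_comp, MonoidalCategory.whiskerLeft_comp]
    slice_rhs 1 2 => rw [associator_naturality_middle]
    slice_rhs 2 3 => rw [← MonoidalCategory.whiskerLeft_comp, associator_naturality_left,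
      MonoidalCategory.whiskerLeft_comp]
    slice_rhs 3 4 => rw [← MonoidalCategory.whiskerLeft_comp, ← whisker_exchange,
      MonoidalCategory.whiskerLeft_comp]
    slice_rhs 4 6 => rw [← MonoidalCategory.whiskerLeft_comp, ← MonoidalCategory.whiskerLeft_comp,
      ← Category.assoc, hg, MonoidalCategory.whiskerLeft_comp, MonoidalCategory.whiskerLeft_comp]
    -- LHS normalization
    slice_lhs 3 4 => rw [associator_naturality_left]
    slice_lhs 4 5 => rw [← whisker_exchange]
    slice_lhs 5 6 => rw [← whisker_exchange]
    slice_lhs 6 7 => rw [Mod.assoc]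
    slice_lhs 5 6 => rw [associator_naturality_right]
    slice_lhs 4 5 => rw [associator_naturality_right]
    slice_lhs 2 3 => rw [associator_naturality_left]
    slice_lhs 3 4 => rw [associator_naturality_middle]
    slice_lhs 4 5 => rw [← MonoidalCategory.whiskerLeft_comp, ← whisker_exchange,
      MonoidalCategory.whiskerLeft_comp]
    slice_lhs 5 6 => rw [← MonoidalCategory.whiskerLeft_comp, ← whisker_exchange,
      MonoidalCategory.whiskerLeft_comp]
    slice_lhs 1 3 => rw [pentagon_inv_hom_hom_hom_hom]
    simp
  exact key f.hom.hom hg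

/-- Key step: any `A`-linear map between `B`-modules is automatically `B`-linear. -/
lemma key [HasColimits C]
    [∀ X : C, PreservesColimits (tensorLeft X)] [∀ X : C, PreservesColimits (tensorRight X)]
    (f : A ⟶ B) (hiso : IsIso (coequalizer.desc μ[B.X] (mul_coeq f)))
    {M N : Mod C B.X} (g : M.X ⟶ N.X)
    (hg : ((f.hom.hom ▷ M.X) ≫ M.act) ≫ g = (A.X ◁ g) ≫ (f.hom.hom ▷ N.X) ≫ N.act) :
    M.act ≫ g = (B.X ◁ g) ≫ N.act := by
  set π := coequalizer.π (actLeft f) (actRight f) with hπdef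
  have hππ : ((ρ_ B.X).inv ≫ (B.X ◁ η[B.X])) ≫ π = ((λ_ B.X).inv ≫ (η[B.X] ▷ B.X)) ≫ π := by
    rw [← cancel_mono (coequalizer.desc μ[B.X] (mul_coeq f))]
    simp [hπdef]
  have hc : IsColimit (Cofork.ofπ ((tensorRight M.X).map π)
      (by simp only [← Functor.map_comp]; rw [coequalizer.condition]) :
      Cofork ((tensorRight M.X).map (actLeft f)) ((tensorRight M.X).map (actRight f))) :=
    isColimitOfHasCoequalizerOfPreservesColimit (tensorRight M.X) (actLeft f) (actRight f)
  set w : (B.X ⊗ B.X) ⊗ M.X ⟶ N.X :=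
    (α_ B.X B.X M.X).hom ≫ (B.X ◁ (M.act ≫ g)) ≫ N.act with hwdef
  have hw : (tensorRight M.X).map (actLeft f) ≫ w = (tensorRight M.X).map (actRight f) ≫ w := by
    change (actLeft f ▷ M.X) ≫ w = (actRight f ▷ M.X) ≫ w
    exact w_coeq f g hg
  obtain ⟨s, hs⟩ := Cofork.IsColimit.desc' hc w hw
  have hs' : (π ▷ M.X) ≫ s = w := hs
  have e1 : ((((ρ_ B.X).inv ≫ (B.X ◁ η[B.X])) ≫ π) ▷ M.X) ≫ s = (B.X ◁ g) ≫ N.act := by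
    rw [comp_whiskerRight, Category.assoc, hs', hwdef]
    simp only [comp_whiskerRight, Category.assoc, MonoidalCategory.whiskerLeft_comp]
    slice_lhs 2 3 => rw [associator_naturality_middle]
    slice_lhs 3 4 => rw [← MonoidalCategory.whiskerLeft_comp, Mod.one_act]
    slice_lhs 2 3 => rw [MonoidalCategory.triangle]
    simp
  have e2 : ((((λ_ B.X).inv ≫ (η[B.X] ▷ B.X)) ≫ π) ▷ M.X) ≫ s = M.act ≫ g := by
    rw [comp_whiskerRight, Category.assoc, hs', hwdef]
    simp only [comp_whiskerRight, Category.assoc, MonoidalCategory.whiskerLeft_comp]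
    slice_lhs 2 3 => rw [associator_naturality_left]
    slice_lhs 3 4 => rw [← whisker_exchange]
    slice_lhs 4 5 => rw [← whisker_exchange]
    slice_lhs 5 6 => rw [Mod.one_act]
    simp
  rw [← e2, ← e1, hππ]

theorem stmt4 [HasColimits C]
    [∀ X : C, PreservesColimits (tensorLeft X)] [∀ X : C, PreservesColimits (tensorRight X)]
    (f : A ⟶ B) (hiso : IsIso (coequalizer.desc μ[B.X] (mul_coeq f))) :
    (Mod.comap (D := C) f.hom.hom).Full ∧
      (Mod.comap (D := C) f.hom.hom).Faithful := by
  constructor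
  · refine ⟨fun {M N} u => ?_⟩
    refine ⟨Mod.Hom.mk' u.hom (key f hiso u.hom ?_), ?_⟩
    · exact (Mod.Hom.isModHom u).smul_hom
    · ext; rfl
  · exact ⟨fun {M N} g₁ g₂ h => by ext; exact congrArg (fun t => t.hom) h⟩

end Stmt4
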